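/- For all 0 ≤ k < m one has c_{S(k)+1} < c_{S(m)+1} < c_1. Moreover, for every k ≥ 1 and every j with 1 ≤ j ≤ S(k−1) − 1, the map T^j is injective on the interval [c_1, c_{S(k)+1}], and T^j([c_1, c_{S(k)+1}]) = [c_{j+1}, c_{S(k)+1+j}]; in particular I_k^{j+1} = [c_{j+1}, c_{S(k)+1+j}]. -/

import Mathlib

open MeasureTheory Filter Set

theorem iterates_injective_on_intervals
    (lam : ℝ) (hlam1 : 1 < lam) (hlam2 : lam ≤ 2)
    (T : ℝ → ℝ) (hT : ∀ x : ℝ, T x = lam * (1 - |x|) - 1)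
    (c : ℕ → ℝ) (hc : ∀ i : ℕ, c i = T^[i] 0)
    (S : ℤ → ℕ) (hSm2 : S (-2) = 0) (hSm1 : S (-1) = 1)
    (hSrec : ∀ k : ℤ, 0 ≤ k → S k = S (k - 1) + S (k - 2))
    (hcne : ∀ j : ℕ, 1 ≤ j → c j ≠ 0)
    (hc2neg : c 2 < 0) (hc1pos : 0 < c 1)
    (hsame : ∀ k : ℤ, 2 ≤ k → ∀ j : ℕ, 1 ≤ j → j < S (k - 2) →
      (0 < c (S (k - 1) + j) ↔ 0 < c j))
    (hopp : ∀ k : ℤ, 2 ≤ k → (0 < c (S k) ↔ c (S (k - 2)) < 0))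
    (hdec : ∀ k : ℤ, 0 ≤ k → |c (S (k + 1))| < |c (S k)|)
    (hc34 : |c 3| < |c 4|)
    (I : ℤ → Set ℝ)
    (hIdef : ∀ k : ℤ, 0 ≤ k →
      (Even k → I k = Set.uIcc (c (S k)) (c (S (k + 1)))) ∧
      (¬ Even k → I k = Set.uIcc (c (S k)) (c (S (k + 2))))) :
    (∀ k m : ℤ, 0 ≤ k → k < m → c (S k + 1) < c (S m + 1) ∧ c (S m + 1) < c 1) ∧
    (∀ k : ℤ, 1 ≤ k → ∀ j : ℕ, 1 ≤ j → j < S (k - 1) →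
      Set.InjOn (T^[j]) (Set.uIcc (c 1) (c (S k + 1))) ∧
      T^[j] '' Set.uIcc (c 1) (c (S k + 1)) = Set.uIcc (c (j + 1)) (c (S k + 1 + j)) ∧
      T^[j + 1] '' I k = Set.uIcc (c (j + 1)) (c (S k + 1 + j))) := by
  have hlam0 : 0 < lam := by linarith
  have hc1v : c 1 = lam - 1 := by
    rw [hc 1, Function.iterate_one, hT]; simp
  have hcT : ∀ n : ℕ, c (n + 1) = T (c n) := by
    intro n; rw [hc (n + 1), Function.iterate_succ_apply', ← hc n]
  have hTval : ∀ x : ℝ, T x = c 1 - lam * |x| := by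
    intro x; rw [hT x, hc1v]; ring
  have hcS : ∀ n : ℕ, c (n + 1) = c 1 - lam * |c n| := fun n => by
    rw [hcT n, hTval]
  -- Fibonacci facts
  have hS0 : S 0 = 1 := by
    have h := hSrec 0 le_rfl
    norm_num at h
    rw [h, hSm1, hSm2]
  have hS1 : S 1 = 2 := by
    have h := hSrec 1 (by norm_num)
    norm_num at h
    rw [h, hS0, hSm1]
  have hSpos : ∀ k : ℤ, -1 ≤ k → 1 ≤ S k := by
    refine Int.le_induction (motive := fun k _ => 1 ≤ S k) ?_ ?_
    · show 1 ≤ S (-1); rw [hSm1]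
    · intro n hn ih
      have h := hSrec (n + 1) (by linarith)
      rw [show (n : ℤ) + 1 - 1 = n from by ring] at h
      omega
  have habs : ∀ k : ℤ, 0 ≤ k → ∀ m : ℤ, k + 1 ≤ m → |c (S m)| < |c (S k)| := by
    intro k hk
    refine Int.le_induction (motive := fun m _ => |c (S m)| < |c (S k)|) ?_ ?_
    · show |c (S (k + 1))| < |c (S k)|; exact hdec k hk
    · intro n hn ih
      have h1 := hdec n (by linarith)
      linarith
  -- Part 1
  have part1 : ∀ k m : ℤ, 0 ≤ k → k < m → c (S k + 1) < c (S m + 1) ∧ c (S m + 1) < c 1 := by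
    intro k m hk hkm
    have h1 := hcS (S m)
    have h2 := hcS (S k)
    have h3 := habs k hk m (by omega)
    have h4 : c (S m) ≠ 0 := hcne _ (hSpos m (by linarith))
    have h5 : 0 < |c (S m)| := abs_pos.mpr h4
    constructor <;> nlinarith
  -- nonvanishing
  have hC : ∀ k : ℤ, 0 ≤ k → c (S k) ≠ 0 := fun k hk => hcne _ (hSpos k (by linarith))
  -- opposite side, step 2
  have key2 : ∀ k : ℤ, 0 ≤ k → (0 < c (S (k + 2)) ↔ ¬0 < c (S k)) := by
    intro k hk
    have h := hopp (k + 2) (by linarith)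
    rw [show (k : ℤ) + 2 - 2 = k from by ring] at h
    have hne := hC k hk
    constructor
    · intro hp hq
      have := h.mp hp; linarith
    · intro hnp
      exact h.mpr (lt_of_le_of_ne (le_of_not_gt hnp) hne)
  -- alternating pattern on consecutive indices at even places
  have Reven : ∀ n : ℕ,
      ((0 < c (S (2 * (n : ℤ)))) ↔ ¬0 < c (S (2 * (n : ℤ) + 1))) ∧
      ((0 < c (S (2 * (n : ℤ) + 1))) ↔ 0 < c (S (2 * (n : ℤ) + 2))) := by
    intro n
    induction n with
    | zero =>
      simp only [Nat.cast_zero, mul_zero, zero_add]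
      have h2 := key2 0 le_rfl
      simp only [zero_add] at h2
      rw [hS0] at h2 ⊢
      rw [hS1]
      constructor
      · constructor
        · intro _ h; linarith
        · intro _; exact hc1pos
      · constructor
        · intro h; linarith
        · intro h; exact absurd hc1pos (h2.mp h)
    | succ n ih =>
      have k1 := key2 (2 * (n : ℤ)) (by positivity)
      have k2 := key2 (2 * (n : ℤ) + 1) (by positivity)
      have k3 := key2 (2 * (n : ℤ) + 2) (by positivity)
      push_cast
      ring_nf at k1 k2 k3 ih ⊢
      tauto
  have hadj_even : ∀ k : ℤ, 0 ≤ k → Even k → (0 < c (S k) ↔ ¬0 < c (S (k + 1))) := by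
    intro k hk hek
    obtain ⟨r, hr⟩ := hek
    have hr0 : 0 ≤ r := by omega
    lift r to ℕ using hr0 with n
    subst hr
    have := (Reven n).1
    rw [show (2 : ℤ) * (n : ℤ) = (n : ℤ) + (n : ℤ) from by ring] at this
    exact this
  -- T image helpers
  have haff : ∀ p q a b : ℝ, (fun x => p * x + q) '' uIcc a b = uIcc (p * a + q) (p * b + q) := by
    intro p q a b
    rw [show (fun x : ℝ => p * x + q) = (fun y => y + q) ∘ (fun x => p * x) from rfl,
      Set.image_comp, Set.image_const_mul_uIcc, Set.image_add_const_uIcc]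
  have hTle : ∀ x : ℝ, T x ≤ c 1 := by
    intro x; rw [hTval]; have := abs_nonneg x; nlinarith
  have hTorder : ∀ x y : ℝ, |y| ≤ |x| → T x ≤ T y := by
    intro x y h; rw [hTval, hTval]; nlinarith
  -- single branch step
  have hTstep : ∀ a b : ℝ, a ≠ 0 → b ≠ 0 → (0 < a ↔ 0 < b) →
      Set.InjOn T (uIcc a b) ∧ T '' uIcc a b = uIcc (T a) (T b) := by
    intro a b ha hb hab
    rcases lt_or_gt_of_ne ha with haneg | hapos
    · -- both negative
      have hbneg : b < 0 := by
        rcases lt_or_gt_of_ne hb with h | h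
        · exact h
        · exact absurd (hab.mpr h) (not_lt.mpr haneg.le)
      have hmem : ∀ x ∈ uIcc a b, x ≤ 0 := by
        intro x hx
        rcases Set.mem_uIcc.mp hx with ⟨_, h2⟩ | ⟨_, h2⟩ <;> linarith
      have heq : ∀ x ∈ uIcc a b, T x = lam * x + (lam - 1) := by
        intro x hx
        rw [hTval, hc1v, abs_of_nonpos (hmem x hx)]; ring
      constructor
      · intro x hx y hy hxy
        rw [heq x hx, heq y hy] at hxy
        have : lam * x = lam * y := by linarith
        exact mul_left_cancel₀ hlam0.ne' this
      · rw [Set.image_congr heq, haff]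
        rw [show lam * a + (lam - 1) = T a from by rw [hTval, hc1v, abs_of_neg haneg]; ring,
          show lam * b + (lam - 1) = T b from by rw [hTval, hc1v, abs_of_neg hbneg]; ring]
    · -- both positive
      have hbpos : 0 < b := hab.mp hapos
      have hmem : ∀ x ∈ uIcc a b, 0 ≤ x := by
        intro x hx
        rcases Set.mem_uIcc.mp hx with ⟨h1, _⟩ | ⟨h1, _⟩ <;> linarith
      have heq : ∀ x ∈ uIcc a b, T x = -lam * x + (lam - 1) := by
        intro x hx
        rw [hTval, hc1v, abs_of_nonneg (hmem x hx)]; ring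
      constructor
      · intro x hx y hy hxy
        rw [heq x hx, heq y hy] at hxy
        have : lam * x = lam * y := by linarith
        exact mul_left_cancel₀ hlam0.ne' this
      · rw [Set.image_congr heq, haff]
        rw [show -lam * a + (lam - 1) = T a from by rw [hTval, hc1v, abs_of_pos hapos]; ring,
          show -lam * b + (lam - 1) = T b from by rw [hTval, hc1v, abs_of_pos hbpos]; ring]
  -- half interval images
  have hhalfneg : ∀ a : ℝ, a ≤ 0 → T '' Icc a 0 = Icc (T a) (c 1) := by
    intro a ha
    rw [← Set.uIcc_of_le ha]
    have heq : ∀ x ∈ uIcc a (0 : ℝ), T x = lam * x + (lam - 1) := by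
      intro x hx
      rcases Set.mem_uIcc.mp hx with ⟨_, h2⟩ | ⟨_, h2⟩ <;>
        · rw [hTval, hc1v, abs_of_nonpos (by linarith)]; ring
    rw [Set.image_congr heq, haff]
    rw [show lam * a + (lam - 1) = T a from by rw [hTval, hc1v, abs_of_nonpos ha]; ring,
      show lam * 0 + (lam - 1) = c 1 from by rw [hc1v]; ring]
    exact Set.uIcc_of_le (hTle a)
  have hhalfpos : ∀ b : ℝ, 0 ≤ b → T '' Icc 0 b = Icc (T b) (c 1) := by
    intro b hb
    rw [← Set.uIcc_of_le hb]
    have heq : ∀ x ∈ uIcc (0 : ℝ) b, T x = -lam * x + (lam - 1) := by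
      intro x hx
      rcases Set.mem_uIcc.mp hx with ⟨h1, _⟩ | ⟨h1, _⟩ <;>
        · rw [hTval, hc1v, abs_of_nonneg (by linarith)]; ring
    rw [Set.image_congr heq, haff]
    rw [show -lam * 0 + (lam - 1) = c 1 from by rw [hc1v]; ring,
      show -lam * b + (lam - 1) = T b from by rw [hTval, hc1v, abs_of_nonneg hb]; ring]
    exact Set.uIcc_of_ge (hTle b)
  -- image of an interval straddling 0
  have hTcross0 : ∀ a b : ℝ, a < 0 → 0 < b → T '' uIcc a b = Icc (min (T a) (T b)) (c 1) := by
    intro a b ha hb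
    rw [Set.uIcc_of_le (by linarith : a ≤ b),
      ← Set.Icc_union_Icc_eq_Icc ha.le hb.le, Set.image_union, hhalfneg a ha.le, hhalfpos b hb.le]
    rcases le_total (T a) (T b) with h | h
    · rw [min_eq_left h, Set.union_eq_self_of_subset_right (Set.Icc_subset_Icc h le_rfl)]
    · rw [min_eq_right h, Set.union_eq_self_of_subset_left (Set.Icc_subset_Icc h le_rfl)]
  have hTcross : ∀ a b : ℝ, ((a < 0 ∧ 0 < b) ∨ (b < 0 ∧ 0 < a)) → |b| < |a| →
      T '' uIcc a b = uIcc (c 1) (T a) := by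
    intro a b hab hlt
    have hmin : min (T a) (T b) = T a := min_eq_left (hTorder a b hlt.le)
    have hres : uIcc (c 1) (T a) = Icc (T a) (c 1) := Set.uIcc_of_ge (hTle a)
    rcases hab with ⟨ha, hb⟩ | ⟨hb, ha⟩
    · rw [hTcross0 a b ha hb, hmin, hres]
    · rw [Set.uIcc_comm, hTcross0 b a hb ha, min_comm, hmin, hres]
  -- Part 2
  refine ⟨part1, ?_⟩
  intro k hk j hj1 hj2
  have hk0 : (0 : ℤ) ≤ k := by linarith
  have hsame' : ∀ i : ℕ, 1 ≤ i → i < S (k - 1) → (0 < c (S k + i) ↔ 0 < c i) := by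
    intro i h1 h2
    have h := hsame (k + 1) (by linarith) i h1
      (by rw [show (k : ℤ) + 1 - 2 = k - 1 from by ring]; exact h2)
    rw [show (k : ℤ) + 1 - 1 = k from by ring] at h
    exact h
  have main : ∀ i : ℕ, i < S (k - 1) →
      Set.InjOn (T^[i]) (uIcc (c 1) (c (S k + 1))) ∧
      T^[i] '' uIcc (c 1) (c (S k + 1)) = uIcc (c (i + 1)) (c (S k + 1 + i)) := by
    intro i
    induction i with
    | zero =>
      intro _
      refine ⟨fun x _ y _ h => by simpa using h, ?_⟩
      simp
    | succ i ih =>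
      intro hlt
      obtain ⟨hinj, him⟩ := ih (by omega)
      have eidx : S k + 1 + i = S k + (i + 1) := by omega
      have hsgn : 0 < c (S k + 1 + i) ↔ 0 < c (i + 1) := by
        rw [eidx]; exact hsame' (i + 1) (by omega) (by omega)
      have ha : c (i + 1) ≠ 0 := hcne _ (by omega)
      have hb : c (S k + 1 + i) ≠ 0 := hcne _ (by omega)
      obtain ⟨hinjT, himT⟩ := hTstep (c (i + 1)) (c (S k + 1 + i)) ha hb hsgn.symm
      have hmap : Set.MapsTo (T^[i]) (uIcc (c 1) (c (S k + 1)))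
          (uIcc (c (i + 1)) (c (S k + 1 + i))) := by
        rw [← him]; exact Set.mapsTo_image _ _
      constructor
      · rw [Function.iterate_succ']
        exact Set.InjOn.comp hinjT hinj hmap
      · rw [Function.iterate_succ', Set.image_comp, him, himT, ← hcT (i + 1), ← hcT (S k + 1 + i)]
        rfl
  obtain ⟨hinj, him⟩ := main j hj2
  refine ⟨hinj, him, ?_⟩
  -- third: T^[j+1] '' I k
  have hTIk : T '' I k = uIcc (c 1) (c (S k + 1)) := by
    have hI := hIdef k hk0
    by_cases hek : Even k
    · rw [hI.1 hek]
      have hsides := hadj_even k hk0 hek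
      have ha := hC k hk0
      have hb := hC (k + 1) (by linarith)
      have habs1 : |c (S (k + 1))| < |c (S k)| := hdec k hk0
      have hsd : (c (S k) < 0 ∧ 0 < c (S (k + 1))) ∨ (c (S (k + 1)) < 0 ∧ 0 < c (S k)) := by
        rcases lt_or_gt_of_ne ha with h | h
        · left
          refine ⟨h, ?_⟩
          by_contra hq
          have := hsides.mpr hq
          linarith
        · right
          refine ⟨?_, h⟩
          have hnq := hsides.mp h
          exact lt_of_le_of_ne (le_of_not_gt hnq) hb
      rw [hTcross _ _ hsd habs1, ← hcT (S k)]
    · rw [hI.2 hek]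
      have hsides := key2 k hk0
      have ha := hC k hk0
      have hb := hC (k + 2) (by linarith)
      have habs2 : |c (S (k + 2))| < |c (S k)| := habs k hk0 (k + 2) (by linarith)
      have hsd : (c (S k) < 0 ∧ 0 < c (S (k + 2))) ∨ (c (S (k + 2)) < 0 ∧ 0 < c (S k)) := by
        rcases lt_or_gt_of_ne ha with h | h
        · left
          exact ⟨h, hsides.mpr (not_lt.mpr h.le)⟩
        · right
          refine ⟨?_, h⟩
          have hnq : ¬ 0 < c (S (k + 2)) := fun hq => (hsides.mp hq) h
          exact lt_of_le_of_ne (le_of_not_gt hnq) hb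
      rw [hTcross _ _ hsd habs2, ← hcT (S k)]
  rw [Function.iterate_succ, Set.image_comp, hTIk, him]
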